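/- Let V be a finite-dimensional real inner product space, R ⊂ V an irreducible reduced root system spanning V, and let a ∈ V be a nonzero dominant minuscule coweight of R. Set R⁺_a = {α ∈ R : (α, a) = 1} and N = |R⁺_a|. Then the sum of the roots in R⁺_a equals (N / (a, a)) · a; in particular this sum is a positive multiple of a. -/

import Mathlib

open scoped RealInnerProductSpace

variable {V : Type*} [NormedAddCommGroup V] [InnerProductSpace ℝ V] [FiniteDimensional ℝ V]

/-- The orthogonal reflection in the hyperplane orthogonal to `α`. -/
noncomputable def rootReflection (α : V) : V → V :=
  fun v => v - (2 * ⟪v, α⟫ / ⟪α, α⟫) • α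

/-- `R` is a reduced root system in `V`. -/
def IsReducedRootSystem (R : Set V) : Prop :=
  R.Finite ∧ (0 : V) ∉ R ∧
    (∀ α ∈ R, ∀ t : ℝ, t • α ∈ R → t = 1 ∨ t = -1) ∧
    (∀ α ∈ R, ∀ β ∈ R, rootReflection α β ∈ R) ∧
    (∀ α ∈ R, ∀ β ∈ R, ∃ m : ℤ, 2 * ⟪β, α⟫ / ⟪α, α⟫ = (m : ℝ))

/-- The Weyl group of `R`: the subgroup of the orthogonal group of `V` generated by the
reflections in the roots of `R`. -/
noncomputable def weylGroup (R : Set V) : Subgroup (V ≃ₗᵢ[ℝ] V) :=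
  Subgroup.closure {w | ∃ α ∈ R, ∀ v : V, w v = rootReflection α v}

/-- Two vectors lie in the same irreducible component of `R`: the equivalence relation
generated by non-orthogonality of roots. -/
def SameComponent (R : Set V) : V → V → Prop :=
  Relation.EqvGen fun x y => x ∈ R ∧ y ∈ R ∧ ⟪x, y⟫ ≠ 0

/-- `a` is minuscule: for every irreducible component `Rᵢ` of `R`, the set of inner
products `{(α, a) : α ∈ Rᵢ}` has at most `3` elements. -/
def IsMinuscule (R : Set V) (a : V) : Prop :=
  ∀ α ∈ R, ({t : ℝ | ∃ β ∈ R, SameComponent R α β ∧ ⟪β, a⟫ = t}).ncard ≤ 3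

/-- `Δ` is a base of the root system `R`: a linearly independent subset of `R` such that
every root is a linear combination of elements of `Δ` with integer coefficients, all of
the same sign. -/
def IsBase (R Δ : Set V) : Prop :=
  Δ ⊆ R ∧ LinearIndependent ℝ ((↑) : Δ → V) ∧
    ∀ α ∈ R, ∃ c : V →₀ ℤ, (c.support : Set V) ⊆ Δ ∧
      ((∀ β, 0 ≤ c β) ∨ (∀ β, c β ≤ 0)) ∧ α = c.sum fun β m => (m : ℝ) • β

set_option linter.unusedSectionVars false

namespace RootAux

lemma rr_adjoint (γ x y : V) :
    ⟪rootReflection γ x, y⟫ = ⟪x, rootReflection γ y⟫ := by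
  simp only [rootReflection, inner_sub_left, inner_sub_right, real_inner_smul_left,
    real_inner_smul_right]
  rw [real_inner_comm γ y]
  ring

lemma rr_invol (γ : V) (hγ : ⟪γ, γ⟫ ≠ 0) (x : V) :
    rootReflection γ (rootReflection γ x) = x := by
  simp only [rootReflection, inner_sub_left, real_inner_smul_left]
  match_scalars
  · ring
  · field_simp
    ring

noncomputable def reflLM (γ : V) : V →ₗ[ℝ] V where
  toFun := rootReflection γ
  map_add' x y := by
    simp only [rootReflection, inner_add_left]
    match_scalars <;> ring
  map_smul' c x := by
    simp only [rootReflection, real_inner_smul_left, RingHom.id_apply]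
    match_scalars <;> ring

lemma reflLM_apply (γ v : V) : reflLM γ v = rootReflection γ v := rfl

noncomputable def sumOp (F : Finset V) : V →ₗ[ℝ] V where
  toFun x := ∑ α ∈ F, ⟪α, x⟫ • α
  map_add' x y := by simp [inner_add_right, add_smul, Finset.sum_add_distrib]
  map_smul' c x := by simp [real_inner_smul_right, smul_smul, Finset.smul_sum]

lemma sumOp_apply (F : Finset V) (x : V) : sumOp F x = ∑ α ∈ F, ⟪α, x⟫ • α := rfl

lemma sumOp_symm (F : Finset V) : (sumOp F).IsSymmetric := by
  intro x y
  simp only [sumOp_apply, sum_inner, inner_sum, real_inner_smul_left, real_inner_smul_right]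
  refine Finset.sum_congr rfl fun α _ => ?_
  rw [real_inner_comm x α]
  ring

lemma sumOp_comm (F : Finset V) (γ : V) (hγ : ⟪γ, γ⟫ ≠ 0)
    (hc : ∀ α ∈ F, rootReflection γ α ∈ F) (x : V) :
    sumOp F (rootReflection γ x) = rootReflection γ (sumOp F x) := by
  have hinv : ∀ α ∈ F, rootReflection γ (rootReflection γ α) = α := fun α _ => rr_invol γ hγ α
  calc sumOp F (rootReflection γ x) = ∑ α ∈ F, ⟪rootReflection γ α, x⟫ • α := by
        rw [sumOp_apply]
        exact Finset.sum_congr rfl fun α _ => by rw [rr_adjoint]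
    _ = ∑ α ∈ F, ⟪α, x⟫ • rootReflection γ α := by
        refine Finset.sum_nbij' (rootReflection γ) (rootReflection γ) hc hc hinv hinv ?_
        intro α hα
        rw [hinv α hα]
    _ = rootReflection γ (sumOp F x) := by
        rw [← reflLM_apply, sumOp_apply, map_sum]
        exact Finset.sum_congr rfl fun α _ => by rw [map_smul, reflLM_apply]

end RootAux

open scoped Classical in
theorem sum_of_roots_pairing_one
    (R : Set V) (hR : IsReducedRootSystem R)
    (hspan : Submodule.span ℝ R = ⊤)
    (hirr : ∀ α ∈ R, ∀ β ∈ R, SameComponent R α β)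
    (a : V) (ha0 : a ≠ 0)
    (Δ : Set V) (hΔ : IsBase R Δ)
    (hdom : ∀ α ∈ Δ, 0 ≤ ⟪α, a⟫)
    (hmin : ∀ α ∈ R, ⟪α, a⟫ = 0 ∨ ⟪α, a⟫ = 1 ∨ ⟪α, a⟫ = -1) :
    (∑ α ∈ hR.1.toFinset.filter (fun α => ⟪α, a⟫ = 1), α) =
        (((hR.1.toFinset.filter (fun α => ⟪α, a⟫ = 1)).card : ℝ) / ⟪a, a⟫) • a ∧
      0 < ((hR.1.toFinset.filter (fun α => ⟪α, a⟫ = 1)).card : ℝ) / ⟪a, a⟫ := by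
  classical
  obtain ⟨hfin, h0, hred, hrefl, hint⟩ := id hR
  set F : Finset V := hR.1.toFinset with hFdef
  have hmemF : ∀ α : V, α ∈ F ↔ α ∈ R := by
    intro α; rw [hFdef]; exact Set.Finite.mem_toFinset _
  set P : Finset V := F.filter (fun α => ⟪α, a⟫ = 1) with hPdef
  set s : V := ∑ α ∈ P, α with hsdef
  -- basic facts
  have hnz : ∀ α ∈ R, ⟪α, α⟫ ≠ 0 := by
    intro α hα
    rw [inner_self_ne_zero]
    rintro rfl; exact h0 hα
  have hneg : ∀ α ∈ R, -α ∈ R := by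
    intro α hα
    have h := hrefl α hα α hα
    have h2 : 2 * ⟪α, α⟫ / ⟪α, α⟫ = (2 : ℝ) := by
      rw [mul_div_assoc, div_self (hnz α hα), mul_one]
    rw [rootReflection, h2] at h
    convert h using 1
    module
  have haa : (0 : ℝ) < ⟪a, a⟫ := by
    rw [real_inner_self_eq_norm_sq]
    exact pow_pos (norm_pos_iff.mpr ha0) 2
  have : Nontrivial V := nontrivial_of_ne a 0 ha0
  -- the symmetric operator T and an eigenvalue
  set T : V →ₗ[ℝ] V := RootAux.sumOp F with hTdef
  obtain ⟨μ, hμ⟩ : ∃ μ : ℝ, Module.End.HasEigenvalue T μ :=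
    ⟨_, (RootAux.sumOp_symm F).hasEigenvalue_iSup_of_finiteDimensional⟩
  set E : Submodule ℝ V := Module.End.eigenspace T μ with hEdef
  -- E is invariant under root reflections
  have hEinv : ∀ γ ∈ R, ∀ x ∈ E, rootReflection γ x ∈ E := by
    intro γ hγ x hx
    rw [hEdef, Module.End.mem_eigenspace_iff] at hx ⊢
    have hc : ∀ α ∈ F, rootReflection γ α ∈ F := by
      intro α hα
      exact (hmemF _).mpr (hrefl γ hγ α ((hmemF _).mp hα))
    rw [hTdef] at hx ⊢
    rw [RootAux.sumOp_comm F γ (hnz γ hγ) hc x, hx, ← RootAux.reflLM_apply, map_smul,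
      RootAux.reflLM_apply]
  -- each root is in E or orthogonal to E
  have hdichot : ∀ γ ∈ R, γ ∈ E ∨ ∀ x ∈ E, ⟪γ, x⟫ = 0 := by
    intro γ hγ
    by_cases h : ∀ x ∈ E, ⟪γ, x⟫ = 0
    · exact Or.inr h
    push_neg at h
    obtain ⟨x, hxE, hxγ⟩ := h
    left
    have h1 : x - rootReflection γ x ∈ E := E.sub_mem hxE (hEinv γ hγ x hxE)
    have h2 : x - rootReflection γ x = (2 * ⟪x, γ⟫ / ⟪γ, γ⟫) • γ := by
      rw [rootReflection]; abel
    have hxγ' : ⟪x, γ⟫ ≠ 0 := by rw [real_inner_comm]; exact hxγ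
    have hcne : 2 * ⟪x, γ⟫ / ⟪γ, γ⟫ ≠ 0 :=
      div_ne_zero (mul_ne_zero two_ne_zero hxγ') (hnz γ hγ)
    rw [h2] at h1
    have h3 := E.smul_mem (2 * ⟪x, γ⟫ / ⟪γ, γ⟫)⁻¹ h1
    rwa [smul_smul, inv_mul_cancel₀ hcne, one_smul] at h3
  -- same component propagation
  have hsame : ∀ γ β : V, SameComponent R γ β → (γ ∈ E ↔ β ∈ E) := by
    intro γ β h
    induction h with
    | rel x y hxy =>
      obtain ⟨hxR, hyR, hxyne⟩ := hxy
      constructor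
      · intro hxE
        rcases hdichot y hyR with h' | h'
        · exact h'
        · exact absurd (by rw [real_inner_comm]; exact h' x hxE) hxyne
      · intro hyE
        rcases hdichot x hxR with h' | h'
        · exact h'
        · exact absurd (h' y hyE) hxyne
    | refl x => exact Iff.rfl
    | symm x y _ ih => exact ih.symm
    | trans x y z _ _ ih1 ih2 => exact ih1.trans ih2
  -- R is nonempty
  have hRne : ∃ α, α ∈ R := by
    by_contra h
    push_neg at h
    have : R = (∅ : Set V) := Set.eq_empty_iff_forall_notMem.mpr h
    rw [this, Submodule.span_empty] at hspan
    have : a ∈ (⊥ : Submodule ℝ V) := hspan ▸ Submodule.mem_top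
    exact ha0 (Submodule.mem_bot ℝ |>.mp this)
  obtain ⟨α₀, hα₀⟩ := hRne
  -- all roots lie in E
  have hall : ∀ γ ∈ R, γ ∈ E := by
    rcases hdichot α₀ hα₀ with hc | hc
    · intro γ hγ
      exact (hsame α₀ γ (hirr α₀ hα₀ γ hγ)).mp hc
    · exfalso
      obtain ⟨x₀, hx₀E, hx₀ne⟩ := hμ.exists_hasEigenvector
      have hallperp : ∀ γ ∈ R, ⟪γ, x₀⟫ = 0 := by
        intro γ hγ
        rcases hdichot γ hγ with h' | h'
        · have hα₀E : α₀ ∈ E := (hsame γ α₀ (hirr γ hγ α₀ hα₀)).mp h'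
          exact absurd (hc α₀ hα₀E) (hnz α₀ hα₀)
        · exact h' x₀ hx₀E
      have hzero : ∀ y ∈ Submodule.span ℝ R, ⟪y, x₀⟫ = 0 := by
        intro y hy
        induction hy using Submodule.span_induction with
        | mem x hx => exact hallperp x hx
        | zero => simp
        | add x y hx hy ihx ihy => rw [inner_add_left, ihx, ihy]; ring
        | smul c x hx ih => rw [real_inner_smul_left, ih]; ring
      have : ⟪x₀, x₀⟫ = 0 := hzero x₀ (hspan ▸ Submodule.mem_top)
      exact hx₀ne (inner_self_eq_zero.mp this)
  have hEtop : E = ⊤ := by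
    have h1 : Submodule.span ℝ R ≤ E := Submodule.span_le.mpr hall
    rw [hspan] at h1
    exact top_unique h1
  have hT_all : ∀ x : V, T x = μ • x := by
    intro x
    have : x ∈ E := hEtop ▸ Submodule.mem_top
    exact Module.End.mem_eigenspace_iff.mp this
  -- compute T a
  have hTa : T a = s + s := by
    rw [hTdef, RootAux.sumOp_apply]
    have hsplit : ∀ α ∈ F, ⟪α, a⟫ • α =
        (if ⟪α, a⟫ = 1 then α else 0) + (if ⟪α, a⟫ = -1 then -α else 0) := by
      intro α hα
      rcases hmin α ((hmemF _).mp hα) with h | h | h <;> rw [h] <;> norm_num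
    rw [Finset.sum_congr rfl hsplit, Finset.sum_add_distrib,
      ← Finset.sum_filter (fun α => ⟪α, a⟫ = 1) (fun α => α),
      ← Finset.sum_filter (fun α => ⟪α, a⟫ = -1) (fun α => -α)]
    congr 1
    rw [hsdef]
    refine Finset.sum_nbij' Neg.neg Neg.neg ?_ ?_ ?_ ?_ ?_
    · intro α hα
      obtain ⟨hαF, hα1⟩ := Finset.mem_filter.mp hα
      refine Finset.mem_filter.mpr ⟨(hmemF _).mpr (hneg α ((hmemF _).mp hαF)), ?_⟩
      norm_num [inner_neg_left, hα1]
    · intro α hα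
      obtain ⟨hαF, hα1⟩ := Finset.mem_filter.mp hα
      refine Finset.mem_filter.mpr ⟨(hmemF _).mpr (hneg α ((hmemF _).mp hαF)), ?_⟩
      norm_num [inner_neg_left, hα1]
    · intro α _; exact neg_neg α
    · intro α _; exact neg_neg α
    · intro α _; rfl
  have h2s : (2 : ℝ) • s = μ • a := by
    rw [two_smul, ← hTa, hT_all a]
  have hsa : ⟪s, a⟫ = (P.card : ℝ) := by
    rw [hsdef, sum_inner]
    rw [Finset.sum_congr rfl (fun α hα => (Finset.mem_filter.mp hα).2)]
    simp
    convert rfl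
  have hμval : μ * ⟪a, a⟫ = 2 * (P.card : ℝ) := by
    have h := congrArg (fun v => ⟪v, a⟫) h2s
    simp only [real_inner_smul_left] at h
    rw [hsa] at h
    linarith
  have hμeq : (2 : ℝ)⁻¹ * μ = (P.card : ℝ) / ⟪a, a⟫ := by
    field_simp
    linarith
  have hs : s = ((P.card : ℝ) / ⟪a, a⟫) • a := by
    have : s = ((2 : ℝ)⁻¹ * μ) • a := by
      rw [← smul_smul, ← h2s, smul_smul, inv_mul_cancel₀ (two_ne_zero), one_smul]
    rw [this, hμeq]
  -- positivity
  have hex : ∃ α ∈ R, ⟪α, a⟫ ≠ 0 := by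
    by_contra h
    push_neg at h
    have hzero : ∀ y ∈ Submodule.span ℝ R, ⟪y, a⟫ = 0 := by
      intro y hy
      induction hy using Submodule.span_induction with
      | mem x hx => exact h x hx
      | zero => simp
      | add x y hx hy ihx ihy => rw [inner_add_left, ihx, ihy]; ring
      | smul c x hx ih => rw [real_inner_smul_left, ih]; ring
    exact haa.ne' (hzero a (hspan ▸ Submodule.mem_top))
  obtain ⟨α, hαR, hα0⟩ := hex
  have hPne : P.Nonempty := by
    rcases hmin α hαR with h | h | h
    · exact absurd h hα0
    · exact ⟨α, Finset.mem_filter.mpr ⟨(hmemF _).mpr hαR, h⟩⟩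
    · refine ⟨-α, Finset.mem_filter.mpr ⟨(hmemF _).mpr (hneg α hαR), ?_⟩⟩
      norm_num [inner_neg_left, h]
  have hNpos : (0 : ℝ) < (P.card : ℝ) := by
    exact_mod_cast Finset.card_pos.mpr hPne
  exact ⟨hs, div_pos hNpos haa⟩
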